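/- Let v be a cut-vertex of a connected graph G, and let R be a resolving set of G. For any connected component G_i of G - v, if V(G_i) ∩ R = ∅ then the subgraph of G induced by V(G_i) ∪ {v} is isomorphic to a path P_n for some n ≥ 2. Moreover, there is at most one connected component G_i of G - v satisfying V(G_i) ∩ R = ∅. -/

import Mathlib

open SimpleGraph

def IsResolving {V : Type*} (G : SimpleGraph V) (R : Set V) : Prop :=
  ∀ x y : V, x ≠ y → ∃ r ∈ R, G.dist r x ≠ G.dist r y

noncomputable def metricDim {V : Type*} (G : SimpleGraph V) : ℕ :=
  sInf {n | ∃ R : Set V, IsResolving G R ∧ R.ncard = n}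

def IsMetricBasis {V : Type*} (G : SimpleGraph V) (R : Set V) : Prop :=
  IsResolving G R ∧ R.ncard = metricDim G

def IsBasisForced {V : Type*} (G : SimpleGraph V) (v : V) : Prop :=
  ∀ R : Set V, IsMetricBasis G R → v ∈ R

section Aux

variable {V : Type*} {G : SimpleGraph V}

lemma aux_exists_prefix_walk {u w : V} (p : G.Walk u w) (n : ℕ) :
    ∃ q : G.Walk u (p.getVert n), q.length = min n p.length := by
  induction p generalizing n with
  | nil => exact ⟨.nil, by simp⟩
  | cons h q ih =>
    cases n with
    | zero => exact ⟨.nil, by simp; rfl⟩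
    | succ n =>
      obtain ⟨q', hq'⟩ := ih n
      exact ⟨.cons h q', by simp [hq', Nat.succ_min_succ]⟩

lemma aux_exists_suffix_walk {u w : V} (p : G.Walk u w) (n : ℕ) :
    ∃ q : G.Walk (p.getVert n) w, q.length = p.length - n := by
  induction p generalizing n with
  | nil => exact ⟨.nil, by simp⟩
  | cons h q ih =>
    cases n with
    | zero => exact ⟨(Walk.cons h q).copy (Walk.getVert_zero _).symm rfl, by simp⟩
    | succ n =>
      obtain ⟨q', hq'⟩ := ih n
      exact ⟨q'.copy (Walk.getVert_cons_succ _ _).symm rfl, by simp [hq']⟩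

lemma aux_dist_getVert (hG : G.Connected) {u w : V} (p : G.Walk u w)
    (hp : p.length = G.dist u w) {i : ℕ} (hi : i ≤ p.length) :
    G.dist u (p.getVert i) = i := by
  obtain ⟨q1, h1⟩ := aux_exists_prefix_walk p i
  obtain ⟨q2, h2⟩ := aux_exists_suffix_walk p i
  have A : G.dist u (p.getVert i) ≤ i := by
    have := SimpleGraph.dist_le q1
    omega
  have B : G.dist (p.getVert i) w ≤ p.length - i := by
    have := SimpleGraph.dist_le q2
    omega
  have C := hG.dist_triangle (u := u) (v := p.getVert i) (w := w)
  omega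

lemma aux_reachable_induce {S : Set V} {a b : V} (p : G.Walk a b)
    (hp : ∀ x ∈ p.support, x ∈ S) (ha : a ∈ S) (hb : b ∈ S) :
    (G.induce S).Reachable ⟨a, ha⟩ ⟨b, hb⟩ := by
  induction p with
  | nil => exact Reachable.refl _
  | @cons a c b h q ih =>
    have hc : c ∈ S := hp c (by simp)
    have hadj : (G.induce S).Adj ⟨a, ha⟩ ⟨c, hc⟩ := by simpa using h
    exact hadj.reachable.trans (ih (fun x hx => hp x (by simp [hx])) hc hb)

lemma aux_mem_supp {v : V} {C : (G.induce {u | u ≠ v}).ConnectedComponent}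
    {u x : V} (hu : u ∈ Subtype.val '' C.supp) (hx : x ≠ v)
    (p : G.Walk x u) (hp : ∀ y ∈ p.support, y ≠ v) :
    x ∈ Subtype.val '' C.supp := by
  obtain ⟨u', hu', rfl⟩ := hu
  have hr := aux_reachable_induce (S := {u | u ≠ v}) p hp hx u'.2
  refine ⟨⟨x, hx⟩, ?_, rfl⟩
  rw [ConnectedComponent.mem_supp_iff] at hu' ⊢
  rw [← hu']
  have : (⟨u'.1, u'.2⟩ : {u | u ≠ v}) = u' := rfl
  exact this ▸ ConnectedComponent.sound hr

lemma aux_dist_add [DecidableEq V] (hG : G.Connected) {v : V} {C : (G.induce {u | u ≠ v}).ConnectedComponent}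
    {u : V} (hu : u ∈ Subtype.val '' C.supp) {r : V} (hr : r ∉ Subtype.val '' C.supp) :
    G.dist r u = G.dist r v + G.dist v u := by
  refine le_antisymm (hG.dist_triangle) ?_
  obtain ⟨p, hp⟩ := (hG.preconnected r u).exists_walk_length_eq_dist
  have hv : v ∈ p.support := by
    by_contra hv
    have hrv : r ≠ v := fun h => hv (h ▸ p.start_mem_support)
    exact hr (aux_mem_supp hu hrv p (fun y hy hyv => hv (hyv ▸ hy)))
  calc G.dist r v + G.dist v u
      ≤ (p.takeUntil v hv).length + (p.dropUntil v hv).length :=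
        Nat.add_le_add (dist_le _) (dist_le _)
    _ = p.length := by rw [← Walk.length_append, Walk.take_spec]
    _ = G.dist r u := hp

lemma aux_path_support [DecidableEq V] {v : V} {C : (G.induce {u | u ≠ v}).ConnectedComponent}
    {u : V} (hu : u ∈ Subtype.val '' C.supp) (p : G.Walk v u) (hp : p.IsPath)
    {x : V} (hx : x ∈ p.support) : x ∈ (Subtype.val '' C.supp) ∪ {v} := by
  by_cases hxv : x = v
  · exact Or.inr hxv
  refine Or.inl ?_
  have hvq : v ∉ (p.dropUntil x hx).support := by
    have hnd := hp.support_nodup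
    have hsp : p.support = (p.takeUntil x hx).support ++ (p.dropUntil x hx).support.tail := by
      rw [← Walk.support_append, Walk.take_spec]
    rw [hsp] at hnd
    have hdisj := List.disjoint_of_nodup_append hnd
    have hvt : v ∈ (p.takeUntil x hx).support := (p.takeUntil x hx).start_mem_support
    have hvtail : v ∉ (p.dropUntil x hx).support.tail := fun h => hdisj hvt h
    rw [Walk.support_eq_cons]
    simp only [List.mem_cons]
    rintro (h | h)
    · exact hxv h.symm
    · exact hvtail h
  exact aux_mem_supp hu hxv (p.dropUntil x hx) (fun y hy hyv => hvq (hyv ▸ hy))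

lemma aux_exists_path [DecidableEq V] (hG : G.Connected) (v u : V) :
    ∃ p : G.Walk v u, p.IsPath ∧ p.length = G.dist v u := by
  obtain ⟨p0, hp0⟩ := (hG.preconnected v u).exists_walk_length_eq_dist
  exact ⟨p0.bypass, p0.bypass_isPath,
    le_antisymm (le_trans p0.length_bypass_le (le_of_eq hp0)) (dist_le _)⟩

lemma aux_exists_dist_one [DecidableEq V] (hG : G.Connected) {v : V}
    (C : (G.induce {u | u ≠ v}).ConnectedComponent) :
    ∃ u ∈ Subtype.val '' C.supp, G.dist v u = 1 := by
  obtain ⟨u', hrep⟩ := C.exists_rep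
  have hu : u'.val ∈ Subtype.val '' C.supp :=
    ⟨u', by rw [ConnectedComponent.mem_supp_iff]; exact hrep, rfl⟩
  obtain ⟨p, hp, hplen⟩ := aux_exists_path hG v u'.val
  have hL : 1 ≤ p.length := by
    have := hG.pos_dist_of_ne (Ne.symm u'.2)
    omega
  have hmem : p.getVert 1 ∈ p.support := Walk.mem_support_iff_exists_getVert.mpr ⟨1, rfl, hL⟩
  have hd1 : G.dist v (p.getVert 1) = 1 := aux_dist_getVert hG p hplen hL
  have hK := aux_path_support hu p hp hmem
  rcases hK with h | h
  · exact ⟨p.getVert 1, h, hd1⟩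
  · exfalso
    rw [Set.mem_singleton_iff] at h
    rw [h, dist_self] at hd1
    exact one_ne_zero hd1.symm

end Aux

theorem stmt1 {V : Type*} [Fintype V] (G : SimpleGraph V) (hG : G.Connected) (v : V)
    (hcut : ¬ (G.induce {u | u ≠ v}).Connected)
    (R : Set V) (hR : IsResolving G R) :
    (∀ C : (G.induce {u | u ≠ v}).ConnectedComponent,
      (∀ u ∈ C.supp, (u : V) ∉ R) →
      ∃ n : ℕ, 2 ≤ n ∧
        Nonempty ((G.induce ((Subtype.val '' C.supp) ∪ {v})) ≃g pathGraph n)) ∧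
    (∀ C₁ C₂ : (G.induce {u | u ≠ v}).ConnectedComponent,
      (∀ u ∈ C₁.supp, (u : V) ∉ R) → (∀ u ∈ C₂.supp, (u : V) ∉ R) → C₁ = C₂) := by
  classical
  constructor
  · intro C hC
    set T : Set V := Subtype.val '' C.supp with hT
    set K : Set V := T ∪ {v} with hK
    have hvK : v ∈ K := Or.inr rfl
    have hTv : ∀ a ∈ T, a ≠ v := by rintro a ⟨a', _, rfl⟩; exact a'.2
    have hdpos : ∀ a ∈ T, 0 < G.dist v a := fun a ha => hG.pos_dist_of_ne (Ne.symm (hTv a ha))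
    have hinj : ∀ a ∈ K, ∀ b ∈ K, G.dist v a = G.dist v b → a = b := by
      intro a ha b hb hab
      rcases ha with ha | ha <;> rcases hb with hb | hb
      · by_contra hne
        obtain ⟨r, hrR, hrd⟩ := hR a b hne
        have hrT : r ∉ T := by rintro ⟨r', hr', rfl⟩; exact (hC r' hr') hrR
        rw [aux_dist_add hG ha hrT, aux_dist_add hG hb hrT, hab] at hrd
        exact hrd rfl
      · rw [Set.mem_singleton_iff] at hb; subst hb
        rw [dist_self] at hab
        exact absurd hab (Nat.pos_iff_ne_zero.mp (hdpos a ha))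
      · rw [Set.mem_singleton_iff] at ha; subst ha
        rw [dist_self] at hab
        exact absurd hab.symm (Nat.pos_iff_ne_zero.mp (hdpos b hb))
      · rw [Set.mem_singleton_iff] at ha hb; rw [ha, hb]
    have hKfin : K.Finite := Set.toFinite K
    set Kf : Finset V := hKfin.toFinset with hKf
    set N : ℕ := Kf.card with hN
    set I : Finset ℕ := Kf.image (G.dist v) with hI
    have hIcard : I.card = N := Finset.card_image_of_injOn
      (fun a ha b hb => hinj a (hKfin.mem_toFinset.mp ha) b (hKfin.mem_toFinset.mp hb))
    have hdc : ∀ j ∈ I, ∀ k ≤ j, k ∈ I := by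
      intro j hj k hk
      obtain ⟨a, haKf, hja⟩ := Finset.mem_image.mp hj
      have haK : a ∈ K := hKfin.mem_toFinset.mp haKf
      rcases haK with haT | hav
      · obtain ⟨p, hpp, hplen⟩ := aux_exists_path hG v a
        have hk' : k ≤ p.length := by omega
        have hx : p.getVert k ∈ p.support := Walk.mem_support_iff_exists_getVert.mpr ⟨k, rfl, hk'⟩
        have hxK := aux_path_support haT p hpp hx
        exact Finset.mem_image.mpr ⟨p.getVert k, hKfin.mem_toFinset.mpr hxK,
          aux_dist_getVert hG p hplen hk'⟩
      · rw [Set.mem_singleton_iff] at hav; subst hav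
        rw [dist_self] at hja
        have hk0 : k = 0 := by omega
        subst hk0
        exact Finset.mem_image.mpr ⟨a, haKf, dist_self⟩
    have hIr : I = Finset.range N := by
      apply Finset.eq_of_subset_of_card_le
      · intro j hj
        rw [Finset.mem_range]
        by_contra hjN
        push_neg at hjN
        have hsub : Finset.range (j + 1) ⊆ I := by
          intro k hk
          rw [Finset.mem_range] at hk
          exact hdc j hj k (by omega)
        have := Finset.card_le_card hsub
        rw [Finset.card_range, hIcard] at this
        omega
      · rw [hIcard, Finset.card_range]
    have hmemK : ∀ a : K, G.dist v a.val < N := by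
      rintro ⟨a, ha⟩
      have : G.dist v a ∈ I := Finset.mem_image.mpr ⟨a, hKfin.mem_toFinset.mpr ha, rfl⟩
      rw [hIr, Finset.mem_range] at this
      exact this
    set e : K → Fin N := fun a => ⟨G.dist v a.val, hmemK a⟩ with he
    have hebij : Function.Bijective e := by
      constructor
      · rintro a b hab
        exact Subtype.ext (hinj _ a.2 _ b.2 (by simpa [he] using hab))
      · rintro ⟨k, hk⟩
        have hkI : k ∈ I := by rw [hIr, Finset.mem_range]; exact hk
        obtain ⟨a, haKf, hak⟩ := Finset.mem_image.mp hkI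
        exact ⟨⟨a, hKfin.mem_toFinset.mp haKf⟩, by simp [he, hak]⟩
    have hadj1 : ∀ a b : V, G.Adj a b → G.dist v b ≤ G.dist v a + 1 := by
      intro a b h
      have h1 := hG.dist_triangle (u := v) (v := a) (w := b)
      have h2 : G.dist a b = 1 := dist_eq_one_iff_adj.mpr h
      omega
    have hstep : ∀ a ∈ K, ∀ b ∈ K, G.dist v b = G.dist v a + 1 → G.Adj a b := by
      intro a ha b hb hd
      have hbT : b ∈ T := by
        rcases hb with h | h
        · exact h
        · exfalso
          rw [Set.mem_singleton_iff] at h; subst h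
          rw [dist_self] at hd; omega
      obtain ⟨p, hpp, hplen⟩ := aux_exists_path hG v b
      have hL : G.dist v a + 1 ≤ p.length := by omega
      have hcmem : p.getVert (G.dist v a) ∈ p.support :=
        Walk.mem_support_iff_exists_getVert.mpr ⟨_, rfl, by omega⟩
      have hcK : p.getVert (G.dist v a) ∈ K := aux_path_support hbT p hpp hcmem
      have hcd : G.dist v (p.getVert (G.dist v a)) = G.dist v a :=
        aux_dist_getVert hG p hplen (by omega)
      have hca : p.getVert (G.dist v a) = a := hinj _ hcK a ha hcd
      have hadj := p.adj_getVert_succ (i := G.dist v a) (by omega)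
      rw [hca] at hadj
      have hgl : G.dist v a + 1 = p.length := by omega
      rw [hgl, p.getVert_length] at hadj
      exact hadj
    refine ⟨N, ?_, ⟨?_⟩⟩
    · obtain ⟨u₁, hu₁, _⟩ := aux_exists_dist_one hG C
      rw [← hT] at hu₁
      have h2 : (1 : ℕ) < Kf.card := Finset.one_lt_card.mpr
        ⟨u₁, hKfin.mem_toFinset.mpr (Or.inl hu₁), v, hKfin.mem_toFinset.mpr hvK, hTv u₁ hu₁⟩
      omega
    · refine ⟨Equiv.ofBijective e hebij, ?_⟩
      rintro a b
      show (pathGraph N).Adj (e a) (e b) ↔ _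
      rw [pathGraph_adj]
      constructor
      · rintro (h | h)
        · exact hstep a.val a.2 b.val b.2 h.symm
        · exact (hstep b.val b.2 a.val a.2 h.symm).symm
      · intro h
        have hGadj : G.Adj a.val b.val := h
        have hne : G.dist v a.val ≠ G.dist v b.val :=
          fun heq => G.ne_of_adj hGadj (hinj _ a.2 _ b.2 heq)
        have h1 := hadj1 a.val b.val hGadj
        have h2 := hadj1 b.val a.val hGadj.symm
        show G.dist v a.val + 1 = G.dist v b.val ∨ G.dist v b.val + 1 = G.dist v a.val
        omega
  · intro C₁ C₂ h1 h2
    obtain ⟨u₁, hu₁, hd₁⟩ := aux_exists_dist_one hG C₁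
    obtain ⟨u₂, hu₂, hd₂⟩ := aux_exists_dist_one hG C₂
    by_cases hu12 : u₁ = u₂
    · subst hu12
      obtain ⟨a, ha, rfl⟩ := hu₁
      obtain ⟨b, hb, hab⟩ := hu₂
      have hba : b = a := Subtype.ext hab
      subst hba
      rw [ConnectedComponent.mem_supp_iff] at ha hb
      rw [← ha, ← hb]
    · exfalso
      obtain ⟨r, hrR, hrd⟩ := hR u₁ u₂ hu12
      have hr1 : r ∉ Subtype.val '' C₁.supp := by
        rintro ⟨r', hr', rfl⟩; exact (h1 r' hr') hrR
      have hr2 : r ∉ Subtype.val '' C₂.supp := by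
        rintro ⟨r', hr', rfl⟩; exact (h2 r' hr') hrR
      rw [aux_dist_add hG hu₁ hr1, aux_dist_add hG hu₂ hr2, hd₁, hd₂] at hrd
      exact hrd rfl
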